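/- Let Q(ξ) = ½⟨Bξ, ξ⟩ be a nondegenerate quadratic form on ℝ^q (B symmetric invertible), let P be a set, and let W : P × ℝ^q → ℝ be such that there exist constants b, c with |W(p,0)| ≤ b and W(p,·) Lipschitz with constant c for every p ∈ P. Let θ : ℝ^q → [0,1] be C¹ with compact support, identically 1 on a neighborhood of 0, and ‖Dθ‖ ≤ 1 everywhere. Then there exist constants a > 1 and b' > 0 such that, setting S_K(p,ξ) := θ(ξ/a)·W(p,ξ) + Q(ξ) and S(p,ξ) := W(p,ξ) + Q(ξ): (i) S_K(p,ξ) = S(p,ξ) whenever ‖ξ‖ ≤ b'; (ii) 0 ∉ ∂_ξS_K(p,ξ) whenever ‖ξ‖ ≥ b', where ∂_ξS_K denotes the Clarke generalized gradient of ξ ↦ S_K(p,ξ); and (iii) S_K(p,ξ) = Q(ξ) for ξ outside a compact set independent of p. Consequently { (p, ξ) : 0 ∈ ∂_ξS_K(p,ξ) } = { (p, ξ) : 0 ∈ ∂_ξS(p,ξ), ‖ξ‖ ≤ b' } and S_K agrees with S on this set. -/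

import Mathlib

open RealInnerProductSpace Filter Topology

/-- The Clarke generalized directional derivative
`f°(p; v) = limsup_{q → p, t ↓ 0} (f(q + t v) − f(q)) / t`. -/
noncomputable def cDD {F : Type*} [NormedAddCommGroup F] [NormedSpace ℝ F]
    (f : F → ℝ) (p v : F) : ℝ :=
  Filter.limsup (fun qt : F × ℝ => (f (qt.1 + qt.2 • v) - f qt.1) / qt.2)
    ((nhds p) ×ˢ (nhdsWithin 0 (Set.Ioi 0)))

/-- The Clarke generalized gradient `∂f(p) = {ζ : ⟨ζ, v⟩ ≤ f°(p; v) for all v}`. -/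
noncomputable def clarkeGrad {F : Type*} [NormedAddCommGroup F] [InnerProductSpace ℝ F]
    (f : F → ℝ) (p : F) : Set F :=
  { ζ | ∀ v, ⟪ζ, v⟫ ≤ cDD f p v }

lemma cDD_congr' {F : Type*} [NormedAddCommGroup F] [NormedSpace ℝ F]
    {f g : F → ℝ} {p : F} (h : f =ᶠ[nhds p] g) (v : F) : cDD f p v = cDD g p v := by
  unfold cDD
  apply Filter.limsup_congr
  obtain ⟨ε, εpos, hε⟩ := Metric.eventually_nhds_iff.mp h
  set η := ε / (2 * (‖v‖ + 1)) with hη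
  have hvpos : (0:ℝ) < ‖v‖ + 1 := by positivity
  have hηpos : 0 < η := by positivity
  have h1 : ∀ᶠ q in nhds p, dist q p < ε / 2 :=
    Filter.eventually_of_mem (Metric.ball_mem_nhds p (half_pos εpos)) fun y hy => hy
  have h2 : ∀ᶠ t in nhdsWithin (0:ℝ) (Set.Ioi 0), |t| < η := by
    refine eventually_nhdsWithin_of_eventually_nhds ?_
    have : ∀ᶠ t in nhds (0:ℝ), dist t 0 < η :=
      Filter.eventually_of_mem (Metric.ball_mem_nhds 0 hηpos) fun y hy => hy
    simpa [Real.dist_eq] using this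
  filter_upwards [h1.prod_mk h2] with qt hqt
  obtain ⟨hq, ht⟩ := hqt
  have key : ∀ x : F, dist x p < ε → f x = g x := fun x hx => hε hx
  have e1 : f qt.1 = g qt.1 := key _ (by linarith)
  have e2 : f (qt.1 + qt.2 • v) = g (qt.1 + qt.2 • v) := by
    apply key
    have hd : dist (qt.1 + qt.2 • v) qt.1 = |qt.2| * ‖v‖ := by
      simp [dist_eq_norm, norm_smul]
    calc dist (qt.1 + qt.2 • v) p ≤ dist (qt.1 + qt.2 • v) qt.1 + dist qt.1 p :=
          dist_triangle _ _ _
      _ < |qt.2| * ‖v‖ + ε/2 := by rw [hd]; linarith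
      _ ≤ ε := by
          have h3 : |qt.2| * ‖v‖ ≤ |qt.2| * (‖v‖ + 1) := by
            have := abs_nonneg qt.2; nlinarith
          have h4 : |qt.2| * (‖v‖ + 1) < η * (‖v‖ + 1) :=
            mul_lt_mul_of_pos_right ht hvpos
          have h5 : η * (‖v‖ + 1) = ε / 2 := by rw [hη]; field_simp
          linarith
  rw [e1, e2]

lemma clarkeGrad_congr' {F : Type*} [NormedAddCommGroup F] [InnerProductSpace ℝ F]
    {f g : F → ℝ} {p : F} (h : f =ᶠ[nhds p] g) : clarkeGrad f p = clarkeGrad g p := by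
  unfold clarkeGrad
  ext ζ
  exact forall_congr' fun v => by rw [cDD_congr' h v]

lemma cDD_le_of_eventually' {F : Type*} [NormedAddCommGroup F] [InnerProductSpace ℝ F]
    (f : F → ℝ) (p v : F) {lo hi : ℝ}
    (h : ∀ᶠ qt in (nhds p) ×ˢ (nhdsWithin (0:ℝ) (Set.Ioi 0)),
      (f (qt.1 + qt.2 • v) - f qt.1) / qt.2 ∈ Set.Icc lo hi) :
    cDD f p v ≤ hi :=
  Filter.limsup_le_of_le
    (Filter.isCoboundedUnder_le_of_eventually_le _ (h.mono fun _ hx => hx.1))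
    (h.mono fun _ hx => hx.2)

set_option maxHeartbeats 1000000 in
/-- Truncating the family `S(p,ξ) = W(p,ξ) + Q(ξ)` by a cutoff `θ` yields,
for suitable `a > 1` and `b' > 0`, a family `S_K(p,ξ) = θ(ξ/a) W(p,ξ) + Q(ξ)` that agrees
with `S` on `{‖ξ‖ ≤ b'}`, has no Clarke-critical points (in `ξ`) with `‖ξ‖ ≥ b'`, equals `Q`
outside a compact set independent of `p`, and has the same critical set as `S` below level
`b'`, where `S_K` agrees with `S`. -/
theorem truncated_generating_family {q : ℕ} {P : Type*}
    (B : EuclideanSpace ℝ (Fin q) →L[ℝ] EuclideanSpace ℝ (Fin q))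
    (hBsymm : ∀ u v : EuclideanSpace ℝ (Fin q), ⟪B u, v⟫ = ⟪u, B v⟫)
    (hBbij : Function.Bijective B)
    (W : P → EuclideanSpace ℝ (Fin q) → ℝ) (b : ℝ) (c : NNReal)
    (hWb : ∀ p, |W p 0| ≤ b)
    (hWc : ∀ p, LipschitzWith c (W p))
    (θ : EuclideanSpace ℝ (Fin q) → ℝ)
    (hθC1 : ContDiff ℝ 1 θ) (hθsupp : HasCompactSupport θ)
    (hθrange : ∀ ξ, θ ξ ∈ Set.Icc (0 : ℝ) 1)
    (hθone : ∀ᶠ ξ in nhds (0 : EuclideanSpace ℝ (Fin q)), θ ξ = 1)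
    (hθD : ∀ ξ, ‖fderiv ℝ θ ξ‖ ≤ 1) :
    ∃ a > (1 : ℝ), ∃ b' > (0 : ℝ),
      (∀ p ξ, ‖ξ‖ ≤ b' →
        θ (a⁻¹ • ξ) * W p ξ + (1 / 2) * ⟪B ξ, ξ⟫ = W p ξ + (1 / 2) * ⟪B ξ, ξ⟫) ∧
      (∀ p ξ, b' ≤ ‖ξ‖ →
        (0 : EuclideanSpace ℝ (Fin q)) ∉
          clarkeGrad (fun ξ' => θ (a⁻¹ • ξ') * W p ξ' + (1 / 2) * ⟪B ξ', ξ'⟫) ξ) ∧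
      (∃ C : Set (EuclideanSpace ℝ (Fin q)), IsCompact C ∧
        ∀ p, ∀ ξ ∉ C, θ (a⁻¹ • ξ) * W p ξ + (1 / 2) * ⟪B ξ, ξ⟫ = (1 / 2) * ⟪B ξ, ξ⟫) ∧
      ({pξ : P × EuclideanSpace ℝ (Fin q) |
          (0 : EuclideanSpace ℝ (Fin q)) ∈
            clarkeGrad (fun ξ' => θ (a⁻¹ • ξ') * W pξ.1 ξ' + (1 / 2) * ⟪B ξ', ξ'⟫) pξ.2} =
        {pξ : P × EuclideanSpace ℝ (Fin q) |
          (0 : EuclideanSpace ℝ (Fin q)) ∈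
            clarkeGrad (fun ξ' => W pξ.1 ξ' + (1 / 2) * ⟪B ξ', ξ'⟫) pξ.2 ∧ ‖pξ.2‖ ≤ b'}) ∧
      ∀ p ξ, (0 : EuclideanSpace ℝ (Fin q)) ∈
          clarkeGrad (fun ξ' => θ (a⁻¹ • ξ') * W p ξ' + (1 / 2) * ⟪B ξ', ξ'⟫) ξ →
        θ (a⁻¹ • ξ) * W p ξ + (1 / 2) * ⟪B ξ, ξ⟫ = W p ξ + (1 / 2) * ⟪B ξ, ξ⟫ := by
  -- the radius on which θ = 1
  obtain ⟨ε0, ε0pos, hε0⟩ := Metric.eventually_nhds_iff.mp hθone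
  set δ := ε0 / 2 with hδ
  have δpos : 0 < δ := by positivity
  -- invert B
  set e := ContinuousLinearEquiv.ofBijective B
    (LinearMap.ker_eq_bot.mpr hBbij.1) (LinearMap.range_eq_top.mpr hBbij.2) with he
  set M := ‖(e.symm : EuclideanSpace ℝ (Fin q) →L[ℝ] EuclideanSpace ℝ (Fin q))‖ + 1 with hMdef
  have hM1 : (1:ℝ) ≤ M := by
    have := norm_nonneg (e.symm : EuclideanSpace ℝ (Fin q) →L[ℝ] EuclideanSpace ℝ (Fin q)); simp only [hMdef]; linarith
  have hMpos : (0:ℝ) < M := by linarith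
  have hMB : ∀ ξ : EuclideanSpace ℝ (Fin q), ‖ξ‖ ≤ M * ‖B ξ‖ := by
    intro ξ
    have h1 : ξ = e.symm (B ξ) := by
      have : e ξ = B ξ := rfl
      rw [← this, ContinuousLinearEquiv.symm_apply_apply]
    calc ‖ξ‖ = ‖e.symm (B ξ)‖ := by rw [← h1]
      _ ≤ ‖(e.symm : EuclideanSpace ℝ (Fin q) →L[ℝ] EuclideanSpace ℝ (Fin q))‖ * ‖B ξ‖ := (e.symm : EuclideanSpace ℝ (Fin q) →L[ℝ] EuclideanSpace ℝ (Fin q)).le_opNorm _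
      _ ≤ M * ‖B ξ‖ := by
          have := norm_nonneg (B ξ)
          have := norm_nonneg (e.symm : EuclideanSpace ℝ (Fin q) →L[ℝ] EuclideanSpace ℝ (Fin q))
          nlinarith
  set b₀ := max b 0 with hb₀def
  have hb₀ : (0:ℝ) ≤ b₀ := le_max_right _ _
  have hWb₀ : ∀ p, |W p 0| ≤ b₀ := fun p => (hWb p).trans (le_max_left _ _)
  have hc0 : (0:ℝ) ≤ (c:ℝ) := c.coe_nonneg
  set b' := 2 * M * (b₀ + (c:ℝ) + 1) with hb'def
  have hb'pos : 0 < b' := by nlinarith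
  set a := max (2 * M * (c:ℝ) + 2) ((b' + 1) / δ + 2) with hadef
  have ha2 : (2:ℝ) ≤ a := le_trans (by nlinarith) (le_max_left _ _)
  have ha1 : (1:ℝ) < a := by linarith
  have hapos : (0:ℝ) < a := by linarith
  have hainv : (0:ℝ) < a⁻¹ := inv_pos.mpr hapos
  have hac : 2 * M * (c:ℝ) ≤ a := le_trans (by linarith) (le_max_left _ _)
  have haδ : (b' + 1) / δ ≤ a := le_trans (by linarith) (le_max_right _ _)
  -- θ(ξ/a) = 1 on the ball of radius b'+1
  have hone : ∀ x : EuclideanSpace ℝ (Fin q), ‖x‖ < b' + 1 → θ (a⁻¹ • x) = 1 := by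
    intro x hx
    apply hε0
    rw [dist_zero_right, norm_smul, norm_inv, Real.norm_eq_abs, abs_of_pos hapos]
    have h1 : b' + 1 ≤ δ * a := by
      rw [div_le_iff₀ δpos] at haδ; linarith [haδ]
    have h2 : a⁻¹ * ‖x‖ < a⁻¹ * (b' + 1) := by
      exact mul_lt_mul_of_pos_left hx hainv
    have h3 : a⁻¹ * (b' + 1) ≤ δ := by
      rw [inv_mul_le_iff₀ hapos]; linarith
    linarith
  -- θ is 1-Lipschitz
  have hθlip : LipschitzWith 1 θ :=
    lipschitzWith_of_nnnorm_fderiv_le (hθC1.differentiable one_ne_zero)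
      (fun x => by rw [← NNReal.coe_le_coe]; simpa using hθD x)
  -- Lipschitz-type bound for the truncated perturbation
  have hgbound : ∀ (p : P) (x y : EuclideanSpace ℝ (Fin q)),
      |θ (a⁻¹ • x) * W p x - θ (a⁻¹ • y) * W p y|
        ≤ ‖x - y‖ * ((b₀ + (c:ℝ) * ‖x‖) * a⁻¹ + (c:ℝ)) := by
    intro p x y
    have hθd : |θ (a⁻¹ • x) - θ (a⁻¹ • y)| ≤ a⁻¹ * ‖x - y‖ := by
      have h := hθlip.dist_le_mul (a⁻¹ • x) (a⁻¹ • y)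
      simpa [Real.dist_eq, dist_eq_norm, ← smul_sub, norm_smul, abs_of_pos hainv, abs_of_pos hapos] using h
    have hWx : |W p x| ≤ b₀ + (c:ℝ) * ‖x‖ := by
      have h1 : |W p x - W p 0| ≤ (c:ℝ) * ‖x‖ := by
        have := (hWc p).dist_le_mul x 0
        simpa [Real.dist_eq, dist_eq_norm] using this
      have h2 := hWb₀ p
      calc |W p x| = |(W p x - W p 0) + W p 0| := by ring_nf
        _ ≤ |W p x - W p 0| + |W p 0| := abs_add_le _ _
        _ ≤ b₀ + (c:ℝ) * ‖x‖ := by linarith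
    have hWd : |W p x - W p y| ≤ (c:ℝ) * ‖x - y‖ := by
      have := (hWc p).dist_le_mul x y
      simpa [Real.dist_eq, dist_eq_norm] using this
    have hθy : |θ (a⁻¹ • y)| ≤ 1 :=
      abs_le.mpr ⟨by linarith [(hθrange (a⁻¹ • y)).1], (hθrange (a⁻¹ • y)).2⟩
    have key : θ (a⁻¹ • x) * W p x - θ (a⁻¹ • y) * W p y
        = (θ (a⁻¹ • x) - θ (a⁻¹ • y)) * W p x + θ (a⁻¹ • y) * (W p x - W p y) := by ring
    rw [key]
    have t1 : |(θ (a⁻¹ • x) - θ (a⁻¹ • y)) * W p x| ≤ (a⁻¹ * ‖x - y‖) * (b₀ + (c:ℝ) * ‖x‖) := by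
      rw [abs_mul]
      exact mul_le_mul hθd hWx (abs_nonneg _)
        (mul_nonneg hainv.le (norm_nonneg _))
    have t2 : |θ (a⁻¹ • y) * (W p x - W p y)| ≤ 1 * ((c:ℝ) * ‖x - y‖) := by
      rw [abs_mul]
      exact mul_le_mul hθy hWd (abs_nonneg _) zero_le_one
    have t3 : (a⁻¹ * ‖x - y‖) * (b₀ + (c:ℝ) * ‖x‖) + 1 * ((c:ℝ) * ‖x - y‖)
        = ‖x - y‖ * ((b₀ + (c:ℝ) * ‖x‖) * a⁻¹ + (c:ℝ)) := by ring
    calc |(θ (a⁻¹ • x) - θ (a⁻¹ • y)) * W p x + θ (a⁻¹ • y) * (W p x - W p y)|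
        ≤ |(θ (a⁻¹ • x) - θ (a⁻¹ • y)) * W p x| + |θ (a⁻¹ • y) * (W p x - W p y)| := abs_add_le _ _
      _ ≤ ‖x - y‖ * ((b₀ + (c:ℝ) * ‖x‖) * a⁻¹ + (c:ℝ)) := by rw [← t3]; linarith
  -- quadratic expansion
  have hQ : ∀ (u w : EuclideanSpace ℝ (Fin q)) (t : ℝ), (1:ℝ)/2 * ⟪B (u + t • w), u + t • w⟫ - 1/2 * ⟪B u, u⟫
      = t * ⟪B u, w⟫ + t^2/2 * ⟪B w, w⟫ := by
    intro u w t
    have hsy : ⟪B w, u⟫ = ⟪B u, w⟫ := by rw [hBsymm w u, real_inner_comm]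
    simp only [map_add, map_smul, inner_add_left, inner_add_right, real_inner_smul_left,
      real_inner_smul_right]
    rw [hsy]; ring
  -- quotient identity
  have hquot : ∀ (p : P) (vv qq : EuclideanSpace ℝ (Fin q)) (t : ℝ), t ≠ 0 →
      ((θ (a⁻¹ • (qq + t • vv)) * W p (qq + t • vv) + 1/2 * ⟪B (qq + t • vv), qq + t • vv⟫)
        - (θ (a⁻¹ • qq) * W p qq + 1/2 * ⟪B qq, qq⟫)) / t
      = (θ (a⁻¹ • (qq + t • vv)) * W p (qq + t • vv) - θ (a⁻¹ • qq) * W p qq) / t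
        + (⟪B qq, vv⟫ + t/2 * ⟪B vv, vv⟫) := by
    intro p vv qq t ht
    have h := hQ qq vv t
    have expand : (θ (a⁻¹ • (qq + t • vv)) * W p (qq + t • vv) + 1/2 * ⟪B (qq + t • vv), qq + t • vv⟫)
        - (θ (a⁻¹ • qq) * W p qq + 1/2 * ⟪B qq, qq⟫)
        = (θ (a⁻¹ • (qq + t • vv)) * W p (qq + t • vv) - θ (a⁻¹ • qq) * W p qq)
          + (t * ⟪B qq, vv⟫ + t^2/2 * ⟪B vv, vv⟫) := by linear_combination h
    rw [expand, add_div]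
    congr 1
    field_simp
  -- no critical points outside the ball of radius b'
  have hcrit : ∀ (p : P) (ξ : EuclideanSpace ℝ (Fin q)), b' ≤ ‖ξ‖ →
      (0 : EuclideanSpace ℝ (Fin q)) ∉ clarkeGrad (fun ξ' => θ (a⁻¹ • ξ') * W p ξ' + (1 / 2) * ⟪B ξ', ξ'⟫) ξ := by
    intro p ξ hξ h0
    have hv0 : (0:ℝ) ≤ cDD (fun ξ' => θ (a⁻¹ • ξ') * W p ξ' + (1 / 2) * ⟪B ξ', ξ'⟫) ξ (-(B ξ)) := by
      have := h0 (-(B ξ))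
      rwa [inner_zero_left] at this
    set v := -(B ξ) with hv
    set ub := fun qt : EuclideanSpace ℝ (Fin q) × ℝ => ⟪B qt.1, v⟫ + qt.2/2 * ⟪B v, v⟫
      + ‖v‖ * ((b₀ + (c:ℝ) * ‖qt.1 + qt.2 • v‖) * a⁻¹ + (c:ℝ)) with hub
    set lb := fun qt : EuclideanSpace ℝ (Fin q) × ℝ => ⟪B qt.1, v⟫ + qt.2/2 * ⟪B v, v⟫
      - ‖v‖ * ((b₀ + (c:ℝ) * ‖qt.1 + qt.2 • v‖) * a⁻¹ + (c:ℝ)) with hlb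
    have hcont : ∀ s : ℝ, Continuous (fun qt : EuclideanSpace ℝ (Fin q) × ℝ => ⟪B qt.1, v⟫ + qt.2/2 * ⟪B v, v⟫
        + s * (‖v‖ * ((b₀ + (c:ℝ) * ‖qt.1 + qt.2 • v‖) * a⁻¹ + (c:ℝ)))) := by
      intro s
      apply Continuous.add
      · exact (continuous_inner.comp ((B.continuous.comp continuous_fst).prodMk
          continuous_const)).add ((continuous_snd.div_const 2).mul continuous_const)
      · exact continuous_const.mul (continuous_const.mul
          ((continuous_const.add (continuous_const.mul
            ((continuous_fst.add (continuous_snd.smul continuous_const)).norm))).mul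
              continuous_const |>.add continuous_const))
    have hub_cont : Continuous ub := by
      have := hcont 1
      simpa [one_mul] using this
    have hlb_cont : Continuous lb := by
      have := hcont (-1)
      simp only [neg_one_mul, ← sub_eq_add_neg] at this
      exact this
    have hFle : (nhds ξ ×ˢ nhdsWithin (0:ℝ) (Set.Ioi 0)) ≤ nhds ((ξ, (0:ℝ))) := by
      rw [nhds_prod_eq]
      exact Filter.prod_mono le_rfl nhdsWithin_le_nhds
    set R := ub (ξ, 0) with hR
    have hRval : R = -‖B ξ‖^2 + ‖B ξ‖ * ((b₀ + (c:ℝ) * ‖ξ‖) * a⁻¹ + (c:ℝ)) := by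
      have h2 : ⟪B ξ, v⟫ = -‖B ξ‖^2 := by
        rw [hv, inner_neg_right, real_inner_self_eq_norm_sq]
      have h3 : ‖v‖ = ‖B ξ‖ := by rw [hv, norm_neg]
      have h4 : R = ⟪B ξ, v⟫ + (0:ℝ)/2 * ⟪B v, v⟫
          + ‖v‖ * ((b₀ + (c:ℝ) * ‖ξ + (0:ℝ) • v‖) * a⁻¹ + (c:ℝ)) := rfl
      rw [h4, h2, h3, zero_smul, add_zero]
      ring
    have hubq : ∀ qt : EuclideanSpace ℝ (Fin q) × ℝ, ub qt = ⟪B qt.1, v⟫ + qt.2/2 * ⟪B v, v⟫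
        + ‖v‖ * ((b₀ + (c:ℝ) * ‖qt.1 + qt.2 • v‖) * a⁻¹ + (c:ℝ)) := fun qt => rfl
    have hlbq : ∀ qt : EuclideanSpace ℝ (Fin q) × ℝ, lb qt = ⟪B qt.1, v⟫ + qt.2/2 * ⟪B v, v⟫
        - ‖v‖ * ((b₀ + (c:ℝ) * ‖qt.1 + qt.2 • v‖) * a⁻¹ + (c:ℝ)) := fun qt => rfl
    clear_value R ub lb v
    have hNs : ‖ξ‖ ≤ M * ‖B ξ‖ := hMB ξ
    have hs0 : (0:ℝ) ≤ ‖ξ‖ := norm_nonneg _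
    have hNpos : 0 < ‖B ξ‖ := by nlinarith
    have hkey : (b₀ + (c:ℝ) * ‖ξ‖) * a⁻¹ + (c:ℝ) < ‖B ξ‖ := by
      set u := ‖ξ‖ / (2 * M) with hu
      have h2M : (0:ℝ) < 2 * M := by linarith
      have hus : u * (2 * M) = ‖ξ‖ := div_mul_cancel₀ _ h2M.ne'
      have hu0 : 0 ≤ u := div_nonneg hs0 h2M.le
      have k1 : (b₀ + (c:ℝ) * ‖ξ‖) * a⁻¹ ≤ b₀ + u := by
        rw [← div_eq_mul_inv, div_le_iff₀ hapos]
        nlinarith [mul_le_mul_of_nonneg_left hac hu0]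
      have k2 : b₀ + (c:ℝ) + 1 ≤ u := by nlinarith
      have k3 : 2 * u ≤ ‖B ξ‖ := by nlinarith
      linarith
    have hRneg : R < 0 := by
      rw [hRval]
      nlinarith [mul_lt_mul_of_pos_left hkey hNpos]
    have hub_ev : ∀ᶠ qt in nhds ξ ×ˢ nhdsWithin (0:ℝ) (Set.Ioi 0), ub qt < R/2 :=
      ((hub_cont.tendsto (ξ, 0)).mono_left hFle).eventually_lt_const (by rw [← hR]; linarith)
    have hlb_ev : ∀ᶠ qt in nhds ξ ×ˢ nhdsWithin (0:ℝ) (Set.Ioi 0), lb (ξ, 0) - 1 < lb qt :=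
      ((hlb_cont.tendsto (ξ, 0)).mono_left hFle).eventually_const_lt (by linarith)
    have hpos_ev : ∀ᶠ qt in nhds ξ ×ˢ nhdsWithin (0:ℝ) (Set.Ioi 0), qt.2 ∈ Set.Ioi (0:ℝ) :=
      Filter.Eventually.prod_inr eventually_mem_nhdsWithin _
    have hmain : ∀ᶠ qt in nhds ξ ×ˢ nhdsWithin (0:ℝ) (Set.Ioi 0),
        ((fun ξ' => θ (a⁻¹ • ξ') * W p ξ' + (1 / 2) * ⟪B ξ', ξ'⟫) (qt.1 + qt.2 • v)
          - (fun ξ' => θ (a⁻¹ • ξ') * W p ξ' + (1 / 2) * ⟪B ξ', ξ'⟫) qt.1) / qt.2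
          ∈ Set.Icc (lb (ξ, 0) - 1) (R/2) := by
      filter_upwards [hub_ev, hlb_ev, hpos_ev] with qt h1 h2 h3
      have ht : (0:ℝ) < qt.2 := h3
      rw [hquot p v qt.1 qt.2 ht.ne']
      have hgb := hgbound p (qt.1 + qt.2 • v) qt.1
      have hnorm : ‖qt.1 + qt.2 • v - qt.1‖ = qt.2 * ‖v‖ := by
        simp [norm_smul, abs_of_pos ht]
      rw [hnorm] at hgb
      have hgd : |(θ (a⁻¹ • (qt.1 + qt.2 • v)) * W p (qt.1 + qt.2 • v)
          - θ (a⁻¹ • qt.1) * W p qt.1) / qt.2|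
          ≤ ‖v‖ * ((b₀ + (c:ℝ) * ‖qt.1 + qt.2 • v‖) * a⁻¹ + (c:ℝ)) := by
        rw [abs_div, abs_of_pos ht, div_le_iff₀ ht]
        exact hgb.trans_eq (by ring)
      rw [abs_le] at hgd
      rw [hubq qt] at h1
      rw [hlbq qt] at h2
      constructor
      · linarith [hgd.1]
      · linarith [hgd.2]
    have hle := cDD_le_of_eventually'
      (fun ξ' => θ (a⁻¹ • ξ') * W p ξ' + (1 / 2) * ⟪B ξ', ξ'⟫) ξ v hmain
    linarith
    -- germ equality of S_K and S on the ball of radius b'+1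
  have hgerm : ∀ (p : P) (ξ : EuclideanSpace ℝ (Fin q)), ‖ξ‖ < b' + 1 →
      (fun ξ' => θ (a⁻¹ • ξ') * W p ξ' + (1 / 2) * ⟪B ξ', ξ'⟫)
        =ᶠ[nhds ξ] (fun ξ' => W p ξ' + (1 / 2) * ⟪B ξ', ξ'⟫) := by
    intro p ξ hξ
    have hmem : ξ ∈ Metric.ball (0 : EuclideanSpace ℝ (Fin q)) (b' + 1) := by
      simpa [Metric.mem_ball, dist_zero_right] using hξ
    filter_upwards [Metric.isOpen_ball.mem_nhds hmem] with x hx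
    rw [hone x (by simpa [Metric.mem_ball, dist_zero_right] using hx), one_mul]
  refine ⟨a, ha1, b', hb'pos, ?_, hcrit, ?_, ?_, ?_⟩
  · -- (i) agreement on the ball of radius b'
    intro p ξ hξ
    rw [hone ξ (by linarith), one_mul]
  · -- (iii) equality with Q outside a compact set
    obtain ⟨r, hr⟩ := hθsupp.isBounded.subset_closedBall (0 : EuclideanSpace ℝ (Fin q))
    refine ⟨Metric.closedBall 0 (a * (r + 1)), isCompact_closedBall _ _, ?_⟩
    intro p ξ hξ
    have hξ' : a * (r + 1) < ‖ξ‖ := by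
      by_contra hcon
      exact hξ (by simpa [Metric.mem_closedBall, dist_zero_right] using not_lt.mp hcon)
    have hnot : a⁻¹ • ξ ∉ tsupport θ := by
      intro hmem
      have h1 : ‖a⁻¹ • ξ‖ ≤ r := by
        simpa [Metric.mem_closedBall, dist_zero_right] using hr hmem
      have h2 : r + 1 < a⁻¹ * ‖ξ‖ := by
        rw [← mul_lt_mul_iff_right₀ hapos, ← mul_assoc, mul_inv_cancel₀ hapos.ne', one_mul]
        exact hξ'
      rw [norm_smul, norm_inv, Real.norm_eq_abs, abs_of_pos hapos] at h1
      linarith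
    rw [image_eq_zero_of_notMem_tsupport hnot, zero_mul, zero_add]
  · -- critical sets coincide
    ext ⟨p, ξ⟩
    simp only [Set.mem_setOf_eq]
    constructor
    · intro h
      have hlt : ‖ξ‖ < b' := lt_of_not_ge fun hge => hcrit p ξ hge h
      refine ⟨?_, hlt.le⟩
      rw [← clarkeGrad_congr' (hgerm p ξ (by linarith))]
      exact h
    · rintro ⟨h, hle⟩
      rw [clarkeGrad_congr' (hgerm p ξ (by linarith))]
      exact h
  · -- agreement on the critical set
    intro p ξ h
    have hlt : ‖ξ‖ < b' := lt_of_not_ge fun hge => hcrit p ξ hge h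
    rw [hone ξ (by linarith), one_mul]
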